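/- Let C be an E-linear code. Then the two-sided symplectic hull SHull(C) = C ∩ C^{⊥_S} satisfies (SHull(C))_Res = C_Res ∩ (C_Tor)^{⊥_S} and (SHull(C))_Tor = (C_Res)^{⊥_S} ∩ C_Tor. -/

import Mathlib

open Finset

/-- The non-unital ring `E`, realized as pairs `(u, v) ∈ F₂ × F₂`
representing `uκ + vζ`. -/
def Ering : Type := (ZMod 2) × (ZMod 2)

namespace Ering

instance : AddCommGroup Ering := inferInstanceAs (AddCommGroup ((ZMod 2) × (ZMod 2)))
instance : DecidableEq Ering := inferInstanceAs (DecidableEq ((ZMod 2) × (ZMod 2)))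
instance : Fintype Ering := inferInstanceAs (Fintype ((ZMod 2) × (ZMod 2)))

instance : Mul Ering := ⟨fun a b => (a.1 * b.1, a.2 * b.1)⟩

instance : NonUnitalRing Ering :=
  { (inferInstance : AddCommGroup Ering), (inferInstance : Mul Ering) with
    left_distrib := by decide
    right_distrib := by decide
    zero_mul := by decide
    mul_zero := by decide
    mul_assoc := by decide }

/-- The generator κ. -/
def kappa : Ering := ((1 : ZMod 2), (0 : ZMod 2))
/-- The generator τ. -/
def tau : Ering := ((1 : ZMod 2), (1 : ZMod 2))
/-- ζ = κ + τ. -/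
def zeta : Ering := ((0 : ZMod 2), (1 : ZMod 2))

/-- The scalar action of `F₂` on `E`: `u • e = e` if `u = 1`, else `0`. -/
def fsmul (u : ZMod 2) (e : Ering) : Ering := if u = 1 then e else 0

/-- `E`-vectors of length `2n`, written as a pair `(u | v)` of halves of length `n`. -/
abbrev VE (n : ℕ) := (Fin n → Ering) × (Fin n → Ering)

/-- `F₂`-vectors of length `2n`, written as a pair of halves of length `n`. -/
abbrev VF (n : ℕ) := (Fin n → ZMod 2) × (Fin n → ZMod 2)

/-- Symplectic inner product on `E^{2n}`: `⟨(u|v),(u'|v')⟩ₛ = ⟨u,v'⟩ + ⟨v,u'⟩`. -/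
def sympE {n : ℕ} (x y : VE n) : Ering := ∑ i, x.1 i * y.2 i + ∑ i, x.2 i * y.1 i

/-- Symplectic inner product on `F₂^{2n}`. -/
def sympF {n : ℕ} (x y : VF n) : ZMod 2 := ∑ i, x.1 i * y.2 i + ∑ i, x.2 i * y.1 i

/-- An `E`-linear code: a left `E`-submodule of `E^{2n}`. -/
def IsLinearCode {n : ℕ} (C : Set (VE n)) : Prop :=
  (0 : VE n) ∈ C ∧ (∀ x ∈ C, ∀ y ∈ C, x + y ∈ C) ∧
    (∀ e : Ering, ∀ x ∈ C, ((fun i => e * x.1 i, fun i => e * x.2 i) : VE n) ∈ C)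

/-- Componentwise reduction `π : E^{2n} → F₂^{2n}`, `π(uκ + vζ) = u`. -/
def resVec {n : ℕ} (x : VE n) : VF n := (fun i => (x.1 i).1, fun i => (x.2 i).1)

/-- For `e ∈ E` and `v ∈ F₂^{2n}`, the vector `ev ∈ E^{2n}` with entries `vᵢ • e`. -/
def evec {n : ℕ} (e : Ering) (v : VF n) : VE n :=
  (fun i => fsmul (v.1 i) e, fun i => fsmul (v.2 i) e)

/-- The residue code `C_Res = π(C)`. -/
def resCode {n : ℕ} (C : Set (VE n)) : Set (VF n) := resVec '' C

/-- The torsion code `C_Tor = {v : ζv ∈ C}`. -/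
def torCode {n : ℕ} (C : Set (VE n)) : Set (VF n) := {v | evec zeta v ∈ C}

/-- The left symplectic dual. -/
def leftDual {n : ℕ} (C : Set (VE n)) : Set (VE n) := {z | ∀ w ∈ C, sympE z w = 0}

/-- The right symplectic dual. -/
def rightDual {n : ℕ} (C : Set (VE n)) : Set (VE n) := {z | ∀ w ∈ C, sympE w z = 0}

/-- The two-sided symplectic dual. -/
def dual {n : ℕ} (C : Set (VE n)) : Set (VE n) := leftDual C ∩ rightDual C

/-- The binary symplectic dual of `D ⊆ F₂^{2n}`. -/
def dualF {n : ℕ} (D : Set (VF n)) : Set (VF n) := {z | ∀ w ∈ D, sympF z w = 0}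

/-- The two-sided symplectic hull. -/
def SHull {n : ℕ} (C : Set (VE n)) : Set (VE n) := C ∩ dual C

/-- The left symplectic hull. -/
def LSHull {n : ℕ} (C : Set (VE n)) : Set (VE n) := C ∩ leftDual C

/-- The right symplectic hull. -/
def RSHull {n : ℕ} (C : Set (VE n)) : Set (VE n) := C ∩ rightDual C

/-- Symplectic hull of a binary code. -/
def SHullF {n : ℕ} (D : Set (VF n)) : Set (VF n) := D ∩ dualF D

/-- A free `E`-linear code: residue and torsion codes coincide. -/
def IsFree {n : ℕ} (C : Set (VE n)) : Prop := resCode C = torCode C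

end Ering

namespace Ering

/-- The "second component" map `E^{2n} → F₂^{2n}`. -/
def sndVec {n : ℕ} (x : VE n) : VF n := (fun i => (x.1 i).2, fun i => (x.2 i).2)

lemma kappa_mul' (e : Ering) : kappa * e = fsmul e.1 kappa := by revert e; decide

lemma zeta_mul' (e : Ering) : zeta * e = fsmul e.1 zeta := by revert e; decide

lemma add_kappa_mul (e : Ering) : e + kappa * e = fsmul e.2 zeta := by revert e; decide

lemma fsmul_kappa (u : ZMod 2) : fsmul u kappa = (u, 0) := by fin_cases u <;> rfl

lemma fsmul_zeta (u : ZMod 2) : fsmul u zeta = (0, u) := by fin_cases u <;> rfl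

lemma res_evec_kappa {n : ℕ} (a : VF n) : resVec (evec kappa a) = a := by
  refine Prod.ext ?_ ?_ <;> funext i <;> simp [resVec, evec, fsmul_kappa]

lemma snd_evec_kappa {n : ℕ} (a : VF n) : sndVec (evec kappa a) = 0 := by
  refine Prod.ext ?_ ?_ <;> funext i <;> simp [sndVec, evec, fsmul_kappa]

lemma res_evec_zeta {n : ℕ} (a : VF n) : resVec (evec zeta a) = 0 := by
  refine Prod.ext ?_ ?_ <;> funext i <;> simp [resVec, evec, fsmul_zeta]

lemma snd_evec_zeta {n : ℕ} (a : VF n) : sndVec (evec zeta a) = a := by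
  refine Prod.ext ?_ ?_ <;> funext i <;> simp [sndVec, evec, fsmul_zeta]

lemma evec_zeta_zero {n : ℕ} : evec zeta (0 : VF n) = 0 := by
  refine Prod.ext ?_ ?_ <;> funext i <;> rfl

/-- `sympE x y` is determined by `resVec x`, `sndVec x` and `resVec y`. -/
lemma sympE_eq {n : ℕ} (x y : VE n) :
    sympE x y = (sympF (resVec x) (resVec y), sympF (sndVec x) (resVec y)) := by
  have h1 : ∀ (f : Fin n → Ering), (∑ i, f i) = (∑ i, (f i).1, ∑ i, (f i).2) := by
    intro f
    refine Prod.ext ?_ ?_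
    · exact Prod.fst_sum
    · exact Prod.snd_sum
  simp only [sympE, sympF, h1, resVec, sndVec]
  rfl

lemma sympF_comm {n : ℕ} (x y : VF n) : sympF x y = sympF y x := by
  unfold sympF
  rw [add_comm]
  congr 1 <;> exact Finset.sum_congr rfl (fun i _ => mul_comm _ _)

lemma sympF_zero_left {n : ℕ} (y : VF n) : sympF (0 : VF n) y = 0 := by
  simp [sympF]

lemma sympF_zero_right {n : ℕ} (x : VF n) : sympF x (0 : VF n) = 0 := by
  simp [sympF]

lemma smul_eq_evec_res {n : ℕ} (e : Ering) (he : ∀ f : Ering, e * f = fsmul f.1 e)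
    (x : VE n) :
    ((fun i => e * x.1 i, fun i => e * x.2 i) : VE n) = evec e (resVec x) := by
  refine Prod.ext ?_ ?_ <;> funext i <;> simp [evec, resVec, he]

lemma decomp {n : ℕ} (x : VE n) :
    x = evec kappa (resVec x) + evec zeta (sndVec x) := by
  have key : ∀ e : Ering, e = fsmul e.1 kappa + fsmul e.2 zeta := by decide
  refine Prod.ext ?_ ?_ <;> funext i
  · exact key (x.1 i)
  · exact key (x.2 i)

lemma res_mem_tor {n : ℕ} {C : Set (VE n)} (hC : IsLinearCode C) {x : VE n}
    (hx : x ∈ C) : resVec x ∈ torCode C := by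
  have := hC.2.2 zeta x hx
  rwa [smul_eq_evec_res zeta zeta_mul'] at this

lemma resCode_subset_torCode {n : ℕ} {C : Set (VE n)} (hC : IsLinearCode C) :
    resCode C ⊆ torCode C := by
  rintro a ⟨x, hx, rfl⟩
  exact res_mem_tor hC hx

lemma snd_mem_tor {n : ℕ} {C : Set (VE n)} (hC : IsLinearCode C) {x : VE n}
    (hx : x ∈ C) : sndVec x ∈ torCode C := by
  have hk := hC.2.2 kappa x hx
  have hsum := hC.2.1 x hx _ hk
  have : x + (fun i => kappa * x.1 i, fun i => kappa * x.2 i) = evec zeta (sndVec x) := by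
    refine Prod.ext ?_ ?_ <;> funext i
    · exact add_kappa_mul (x.1 i)
    · exact add_kappa_mul (x.2 i)
  rwa [this] at hsum

/-- Structure theorem: membership in a linear code is determined by residue and torsion. -/
lemma mem_iff {n : ℕ} {C : Set (VE n)} (hC : IsLinearCode C) (x : VE n) :
    x ∈ C ↔ resVec x ∈ resCode C ∧ sndVec x ∈ torCode C := by
  constructor
  · intro hx
    exact ⟨⟨x, hx, rfl⟩, snd_mem_tor hC hx⟩
  · rintro ⟨⟨y, hy, hres⟩, htor⟩
    have hk := hC.2.2 kappa y hy
    rw [smul_eq_evec_res kappa kappa_mul', hres] at hk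
    have := hC.2.1 _ hk _ htor
    rwa [← decomp x] at this

end Ering

open Ering
/-- `(SHull C)_Res = C_Res ∩ (C_Tor)^{⊥_S}` and
`(SHull C)_Tor = (C_Res)^{⊥_S} ∩ C_Tor`. -/
theorem Ering.shull_res_tor {n : ℕ} (C : Set (VE n)) (hC : IsLinearCode C) :
    resCode (SHull C) = resCode C ∩ dualF (torCode C) ∧
    torCode (SHull C) = dualF (resCode C) ∩ torCode C := by
  have hzero : ((0 : ZMod 2), (0 : ZMod 2)) = (0 : Ering) := rfl
  constructor
  · ext a
    constructor
    · rintro ⟨z, ⟨hzC, _, hzR⟩, rfl⟩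
      refine ⟨⟨z, hzC, rfl⟩, ?_⟩
      intro w hw
      have h := hzR (evec zeta w) hw
      rw [sympE_eq, res_evec_zeta, snd_evec_zeta] at h
      have h2 : sympF w (resVec z) = 0 := by
        have := congrArg Prod.snd h; exact this
      rw [sympF_comm]; exact h2
    · rintro ⟨haC, hd⟩
      refine ⟨evec kappa a, ⟨?_, ?_, ?_⟩, res_evec_kappa a⟩
      · rw [mem_iff hC, res_evec_kappa, snd_evec_kappa]
        refine ⟨haC, ?_⟩
        show evec zeta (0 : VF n) ∈ C
        rw [evec_zeta_zero]; exact hC.1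
      · intro w hw
        rw [sympE_eq, res_evec_kappa, snd_evec_kappa, ← hzero]
        refine Prod.ext_iff.2 ?_
        exact ⟨hd _ (resCode_subset_torCode hC ⟨w, hw, rfl⟩), sympF_zero_left _⟩
      · intro w hw
        rw [sympE_eq, res_evec_kappa, ← hzero]; refine Prod.ext_iff.2 ?_; dsimp only
        constructor
        · rw [sympF_comm]; exact hd _ (resCode_subset_torCode hC ⟨w, hw, rfl⟩)
        · rw [sympF_comm]; exact hd _ (snd_mem_tor hC hw)
  · ext b
    constructor
    · rintro ⟨hbC, hbL, _⟩
      refine ⟨?_, hbC⟩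
      rintro w ⟨x, hx, rfl⟩
      have h := hbL x hx
      rw [sympE_eq, snd_evec_zeta] at h
      have := congrArg Prod.snd h; exact this
    · rintro ⟨hd, ht⟩
      refine ⟨ht, ?_, ?_⟩
      · intro w hw
        rw [sympE_eq, res_evec_zeta, snd_evec_zeta, ← hzero]; refine Prod.ext_iff.2 ?_
        exact ⟨sympF_zero_left _, hd _ ⟨w, hw, rfl⟩⟩
      · intro w hw
        rw [sympE_eq, res_evec_zeta, ← hzero]; refine Prod.ext_iff.2 ?_
        exact ⟨sympF_zero_right _, sympF_zero_right _⟩
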